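/- arXiv:1711.01907 — 2 statements merged into one kernel-verified Lean document; each statement's English description precedes it below -/
import Mathlib

section
/- Let R be a commutative ring, q ∈ R, A a commutative R-algebra and y ∈ A. Assume R is q-divisible of q-characteristic p > 0. Then the ideal generated by ξ = ξ^{[1]} in the twisted divided power polynomial ring A⟨ξ⟩_{q,y} equals the free A-submodule generated by the elements ξ^{[k]} with p ∤ k. -/
def qInt {R : Type*} [CommRing R] (q : R) (m : ℕ) : R := ∑ i ∈ Finset.range m, q ^ i

def qChoose {R : Type*} [CommRing R] (q : R) : ℕ → ℕ → R
  | _, 0 => 1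
  | 0, _ + 1 => 0
  | n + 1, k + 1 => qChoose q n k + q ^ (k + 1) * qChoose q n (k + 1)

def dpCoeff {A : Type*} [CommRing A] (q y : A) (m n i : ℕ) : A :=
  (-1 : A) ^ i * q ^ (i * (i - 1) / 2) * qChoose q (m + n - i) m * qChoose q m i * y ^ i

lemma qInt_add {R : Type*} [CommRing R] (q : R) (a c : ℕ) :
    qInt q (a + c) = qInt q a + q ^ a * qInt q c := by
  simp [qInt, Finset.sum_range_add, pow_add, Finset.mul_sum]

lemma qInt_mod {R : Type*} [CommRing R] (q : R) (p : ℕ) (hp : 0 < p)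
    (hp0 : qInt q p = 0) (m : ℕ) : qInt q m = qInt q (m % p) := by
  induction m using Nat.strong_induction_on with
  | _ m ih =>
    rcases lt_or_ge m p with h | h
    · rw [Nat.mod_eq_of_lt h]
    · have hm : m = (m - p) + p := (Nat.sub_add_cancel h).symm
      rw [hm, qInt_add, hp0, mul_zero, add_zero, Nat.add_mod_right]
      exact ih (m - p) (by omega)

lemma qChoose_one_right {R : Type*} [CommRing R] (q : R) (n : ℕ) :
    qChoose q n 1 = qInt q n := by
  induction n with
  | zero => simp [qChoose, qInt]
  | succ n ih =>
    have h : qInt q (n + 1) = 1 + q * qInt q n := by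
      rw [add_comm n 1, qInt_add]; simp [qInt]
    rw [qChoose, ih, h, pow_one]
    simp [qChoose]

/-- If `R` is `q`-divisible of `q`-characteristic `p > 0`, then in the twisted divided power
polynomial ring `A⟨ξ⟩_{q,y}` (any commutative `A`-algebra `B` with basis `ξ^{[n]} = b n` and the
divided power multiplication rule), the ideal generated by `ξ = b 1` equals the free
`A`-submodule generated by the `ξ^{[k]}` with `p ∤ k`. -/
theorem statement4 {R A B : Type*} [CommRing R] [CommRing A] [Algebra R A]
    [CommRing B] [Algebra A B] (q : R) (y : A) (p : ℕ)
    (hdiv : ∀ m : ℕ, qInt q m = 0 ∨ IsUnit (qInt q m))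
    (hp : 0 < p) (hp0 : qInt q p = 0) (hmin : ∀ m : ℕ, 0 < m → m < p → qInt q m ≠ 0)
    (b : Module.Basis ℕ A B)
    (hb : ∀ m n : ℕ, b m * b n = ∑ i ∈ Finset.range (min m n + 1),
      dpCoeff (algebraMap R A q) y m n i • b (m + n - i)) :
    (Ideal.span {b 1} : Set B) =
      (Submodule.span A (⇑b '' {k : ℕ | ¬ p ∣ k}) : Set B) := by
  set q' : A := algebraMap R A q with hq'
  have hmap : ∀ m, qInt q' m = algebraMap R A (qInt q m) := by
    intro m; simp [qInt, map_sum, map_pow, hq']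
  have hzero : ∀ m, p ∣ m → qInt q' m = 0 := by
    intro m hm
    have h0 : m % p = 0 := Nat.eq_zero_of_dvd_of_lt
      ((Nat.dvd_mod_iff (dvd_refl p)).mpr hm) (Nat.mod_lt _ hp)
    rw [hmap, qInt_mod q p hp hp0 m, h0]
    simp [qInt]
  have hunit : ∀ m, ¬ p ∣ m → IsUnit (qInt q' m) := by
    intro m hm
    rw [hmap]
    refine ((hdiv m).resolve_left ?_).map (algebraMap R A)
    rw [qInt_mod q p hp hp0 m]
    refine hmin _ (Nat.pos_of_ne_zero ?_) (Nat.mod_lt _ hp)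
    intro h
    exact hm (Nat.dvd_of_mod_eq_zero h)
  have hmul : ∀ n, b 1 * b n = qInt q' (n + 1) • b (n + 1) - (qInt q' n * y) • b n := by
    intro n
    cases n with
    | zero =>
      rw [hb]
      simp [dpCoeff, qChoose, qInt]
    | succ m =>
      rw [hb]
      have h1 : min 1 (m + 1) = 1 := by omega
      rw [h1, Finset.sum_range_succ, Finset.sum_range_one]
      have e0 : dpCoeff q' y 1 (m + 1) 0 = qInt q' (m + 2) := by
        show (-1 : A) ^ 0 * q' ^ (0 * (0-1) / 2) * qChoose q' (1 + (m+1) - 0) 1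
            * qChoose q' 1 0 * y ^ 0 = _
        have : 1 + (m + 1) - 0 = m + 2 := by omega
        rw [this, qChoose_one_right]
        simp [qChoose]
      have e1 : dpCoeff q' y 1 (m + 1) 1 = -(qInt q' (m + 1) * y) := by
        show (-1 : A) ^ 1 * q' ^ (1 * (1-1) / 2) * qChoose q' (1 + (m+1) - 1) 1
            * qChoose q' 1 1 * y ^ 1 = _
        have : 1 + (m + 1) - 1 = m + 1 := by omega
        rw [this, qChoose_one_right]
        have h11 : qChoose q' 1 1 = 1 := by simp [qChoose]
        rw [h11]
        ring
      have h2 : 1 + (m + 1) - 0 = m + 2 := by omega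
      have h3 : 1 + (m + 1) - 1 = m + 1 := by omega
      rw [h2, h3, e0, e1, neg_smul, sub_eq_add_neg]
  have hSmem : ∀ (a : A) (n : ℕ),
      (qInt q' n * a) • b n ∈ Submodule.span A (⇑b '' {k : ℕ | ¬ p ∣ k}) := by
    intro a n
    by_cases h : p ∣ n
    · rw [hzero n h, zero_mul, zero_smul]
      exact Submodule.zero_mem _
    · exact Submodule.smul_mem _ _ (Submodule.subset_span ⟨n, h, rfl⟩)
  apply Set.Subset.antisymm
  · intro x hx
    rw [SetLike.mem_coe, Ideal.mem_span_singleton'] at hx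
    obtain ⟨a, rfl⟩ := hx
    have ha : a ∈ Submodule.span A (Set.range b) := by rw [b.span_eq]; trivial
    rw [SetLike.mem_coe]
    induction ha using Submodule.span_induction with
    | mem x hx =>
      obtain ⟨n, rfl⟩ := hx
      rw [mul_comm, hmul n]
      refine sub_mem ?_ (hSmem y n)
      simpa using hSmem 1 (n + 1)
    | zero => simp
    | add u v _ _ hu hv => rw [add_mul]; exact add_mem hu hv
    | smul c u _ hu => rw [smul_mul_assoc]; exact Submodule.smul_mem _ _ hu
  · have key : ∀ k, ¬ p ∣ k → b k ∈ Ideal.span {b 1} := by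
      intro k
      induction k with
      | zero => intro h; exact absurd (dvd_zero p) h
      | succ m ih =>
        intro h
        obtain ⟨u, hu⟩ := hunit (m + 1) h
        have h1 : (u : A) • b (m + 1) = b 1 * b m + (qInt q' m * y) • b m := by
          rw [hu, hmul m]; abel
        have h2 : (u : A) • b (m + 1) ∈ Ideal.span {b 1} := by
          rw [h1]
          refine add_mem ?_ ?_
          · rw [mul_comm]
            exact Ideal.mul_mem_left _ _ (Ideal.subset_span (Set.mem_singleton _))
          · by_cases hm : p ∣ m
            · rw [hzero m hm, zero_mul, zero_smul]
              exact Submodule.zero_mem _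
            · rw [Algebra.smul_def]
              exact Ideal.mul_mem_left _ _ (ih hm)
        have h3 : b (m + 1) = ((u⁻¹ : Aˣ) : A) • ((u : A) • b (m + 1)) := by
          rw [smul_smul, Units.inv_mul, one_smul]
        rw [h3, Algebra.smul_def]
        exact Ideal.mul_mem_left _ _ h2
    intro x hx
    rw [SetLike.mem_coe] at hx ⊢
    refine Submodule.span_le (p := (Ideal.span {b 1}).restrictScalars A) |>.mpr ?_ hx
    rintro _ ⟨k, hk, rfl⟩
    exact key k hk
end

section
/- Let R be a commutative ring, q ∈ R, and (A, σ_A) a twisted commutative R-algebra with y ∈ A satisfying σ_A(y) = qy. Let σ be the σ_A-semilinear ring endomorphism of A⟨ξ⟩_{q,y} with σ(ξ^{[n]}) = Σ_{i=0}^{n} y^i ξ^{[n−i]}. Then for all m, n ∈ ℕ with m ≥ 1: σ^m(ξ^{[n]}) = Σ_{i=0}^{n} (m+i−1 choose i)_q y^i ξ^{[n−i]}. -/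
lemma qChoose_zero_right {R : Type*} [CommRing R] (q : R) (n : ℕ) : qChoose q n 0 = 1 := by
  cases n <;> rfl

lemma qChoose_eq_zero {R : Type*} [CommRing R] (q : R) :
    ∀ n k, n < k → qChoose q n k = 0
  | 0, _ + 1, _ => rfl
  | n + 1, k + 1, h => by
    rw [qChoose, qChoose_eq_zero q n k (by omega), qChoose_eq_zero q n (k + 1) (by omega)]
    ring

lemma qChoose_self {R : Type*} [CommRing R] (q : R) : ∀ n, qChoose q n n = 1
  | 0 => rfl
  | n + 1 => by
    rw [qChoose, qChoose_self q n, qChoose_eq_zero q n (n + 1) (by omega)]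
    ring

lemma map_qChoose {A B : Type*} [CommRing A] [CommRing B] (f : A →+* B) (q : A) :
    ∀ n k, f (qChoose q n k) = qChoose (f q) n k
  | n, 0 => by rw [qChoose_zero_right, qChoose_zero_right, map_one]
  | 0, k + 1 => by rw [qChoose, qChoose, map_zero]
  | n + 1, k + 1 => by
    rw [qChoose, qChoose, map_add, map_mul, map_pow, map_qChoose f q n k,
      map_qChoose f q n (k + 1)]

lemma qChoose_sum {R : Type*} [CommRing R] (q : R) (m : ℕ) :
    ∀ k, ∑ i ∈ Finset.range (k + 1), q ^ i * qChoose q (m + i) i = qChoose q (m + k + 1) k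
  | 0 => by simp [qChoose_zero_right]
  | k + 1 => by
    rw [Finset.sum_range_succ, qChoose_sum q m k]
    have h : qChoose q (m + (k + 1) + 1) (k + 1)
        = qChoose q (m + k + 1) k + q ^ (k + 1) * qChoose q (m + k + 1) (k + 1) := by
      show qChoose q ((m + k + 1) + 1) (k + 1) = _
      rw [qChoose]
    rw [h]
    rfl

/-- On the twisted divided power polynomial ring `B = A⟨ξ⟩_{q,y}` (basis `b`), if `σ_B` is the
`σ_A`-semilinear ring endomorphism with `σ_B(ξ^{[n]}) = Σ_{i≤n} y^i ξ^{[n−i]}`, then for `m ≥ 1`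
one has `σ_B^m(ξ^{[n]}) = Σ_{i=0}^{n} (m+i−1 choose i)_q y^i ξ^{[n−i]}`. -/
theorem statement11 {R A B : Type*} [CommRing R] [CommRing A] [Algebra R A]
    [CommRing B] [Algebra A B]
    (q : R) (σA : A →ₐ[R] A) (y : A) (hy : σA y = algebraMap R A q * y)
    (b : Module.Basis ℕ A B)
    (hb : ∀ m n : ℕ, b m * b n = ∑ i ∈ Finset.range (min m n + 1),
      dpCoeff (algebraMap R A q) y m n i • b (m + n - i))
    (σB : B → B)
    (hadd : ∀ u v : B, σB (u + v) = σB u + σB v)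
    (hsmul : ∀ (a : A) (u : B), σB (a • u) = σA a • σB u)
    (hrule : ∀ n : ℕ, σB (b n) = ∑ i ∈ Finset.range (n + 1), y ^ i • b (n - i)) :
    ∀ m n : ℕ, 1 ≤ m →
      σB^[m] (b n) = ∑ i ∈ Finset.range (n + 1),
        (qChoose (algebraMap R A q) (m + i - 1) i * y ^ i) • b (n - i) := by
  classical
  set aq := algebraMap R A q with haq
  have hzero : σB 0 = 0 := by
    have h := hsmul 0 0
    simpa using h
  have hsum : ∀ (s : Finset ℕ) (f : ℕ → B), σB (∑ i ∈ s, f i) = ∑ i ∈ s, σB (f i) := by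
    intro s f
    induction s using Finset.induction_on with
    | empty => simpa using hzero
    | insert _ _ h ih => rw [Finset.sum_insert h, hadd, ih, Finset.sum_insert h]
  have hσC : ∀ n k : ℕ, σA (qChoose aq n k) = qChoose aq n k := by
    intro n k
    rw [show σA (qChoose aq n k) = (σA : A →+* A) (qChoose aq n k) from rfl,
      map_qChoose (σA : A →+* A) aq n k]
    have h2 : (σA : A →+* A) aq = aq := σA.commutes q
    rw [h2]
  intro m n hm
  obtain ⟨m', rfl⟩ : ∃ m', m = m' + 1 := ⟨m - 1, by omega⟩
  clear hm
  induction m' generalizing n with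
  | zero =>
    rw [Function.iterate_one, hrule]
    refine Finset.sum_congr rfl fun i _ => ?_
    rw [show 0 + 1 + i - 1 = i by omega, qChoose_self, one_mul]
  | succ m' ih =>
    rw [Function.iterate_succ_apply', ih, hsum]
    have step : ∀ i : ℕ, σB ((qChoose aq (m' + 1 + i - 1) i * y ^ i) • b (n - i))
        = ∑ j ∈ Finset.range (n - i + 1),
            (aq ^ i * qChoose aq (m' + i) i * y ^ (i + j)) • b (n - (i + j)) := by
      intro i
      rw [hsmul, hrule, Finset.smul_sum]
      refine Finset.sum_congr rfl fun j _ => ?_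
      rw [smul_smul, show n - i - j = n - (i + j) by omega]
      congr 1
      rw [map_mul, map_pow, hy, hσC, show m' + 1 + i - 1 = m' + i by omega, mul_pow,
        pow_add]
      ring
    rw [Finset.sum_congr rfl fun i _ => step i]
    have comm : ∑ i ∈ Finset.range (n + 1), ∑ j ∈ Finset.range (n - i + 1),
          (aq ^ i * qChoose aq (m' + i) i * y ^ (i + j)) • b (n - (i + j))
        = ∑ k ∈ Finset.range (n + 1), ∑ i ∈ Finset.range (k + 1),
            (aq ^ i * qChoose aq (m' + i) i * y ^ k) • b (n - k) := by
      have inner : ∀ i ∈ Finset.range (n + 1),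
          ∑ j ∈ Finset.range (n - i + 1),
              (aq ^ i * qChoose aq (m' + i) i * y ^ (i + j)) • b (n - (i + j))
          = ∑ k ∈ Finset.Ico i (n + 1),
              (aq ^ i * qChoose aq (m' + i) i * y ^ k) • b (n - k) := by
        intro i hi
        rw [Finset.sum_Ico_eq_sum_range]
        exact Finset.sum_congr (by congr 1; simp at hi; omega) fun j _ => rfl
      rw [Finset.sum_congr rfl inner]
      refine Finset.sum_comm' fun i k => ?_
      simp only [Finset.mem_range, Finset.mem_Ico]
      omega
    rw [comm]
    refine Finset.sum_congr rfl fun k hk => ?_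
    have hmul : ∀ i : ℕ, (aq ^ i * qChoose aq (m' + i) i * y ^ k) • b (n - k)
        = (aq ^ i * qChoose aq (m' + i) i) • ((y ^ k : A) • b (n - k)) := by
      intro i
      rw [smul_smul]
    rw [Finset.sum_congr rfl fun i _ => hmul i, ← Finset.sum_smul, qChoose_sum aq m' k,
      show m' + 1 + 1 + k - 1 = m' + k + 1 by omega, smul_smul]
end
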